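/- Let H be a Hilbert algebra. The subset ⟨φ[H]⟩ of the Heyting algebra of upsets of X(H), consisting of all finite intersections φ(a₁) ∩ ⋯ ∩ φ(aₙ) with a₁,…,aₙ ∈ H, is closed under the Heyting implication ⇒ of (X(H))⁺. Hence (⟨φ[H]⟩, ∩, ⇒, X(H)) is an implicative semilattice. -/

import Mathlib

namespace FH

variable {H : Type*}

/-- Hilbert algebra axioms for `(imp, one)`. -/
def IsHilbert (imp : H → H → H) (one : H) : Prop :=
  (∀ a b : H, imp a (imp b a) = one) ∧
  (∀ a b c : H, imp (imp a (imp b c)) (imp (imp a b) (imp a c)) = one) ∧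
  (∀ a b : H, imp a b = one → imp b a = one → a = b)

/-- The natural order of a Hilbert algebra. -/
def hle (imp : H → H → H) (one : H) (a b : H) : Prop := imp a b = one

/-- Implicative filter. -/
def IsImpFilter (imp : H → H → H) (one : H) (F : Set H) : Prop :=
  one ∈ F ∧ ∀ a b : H, a ∈ F → imp a b ∈ F → b ∈ F

/-- Irreducible implicative filter. -/
def IsIrr (imp : H → H → H) (one : H) (F : Set H) : Prop :=
  IsImpFilter imp one F ∧ F ≠ Set.univ ∧
    ∀ F1 F2 : Set H, IsImpFilter imp one F1 → IsImpFilter imp one F2 →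
      F = F1 ∩ F2 → (F = F1 ∨ F = F2)

/-- `φ(a) = {P ∈ X(H) : a ∈ P}`. -/
def phi (imp : H → H → H) (one : H) (a : H) : Set (Set H) :=
  {P | IsIrr imp one P ∧ a ∈ P}

/-- `X(H)`, the set of irreducible implicative filters. -/
def XH (imp : H → H → H) (one : H) : Set (Set H) := {P | IsIrr imp one P}

/-- Upsets of the poset `(X(H), ⊆)`. -/
def IsUp (imp : H → H → H) (one : H) (U : Set (Set H)) : Prop :=
  (∀ P ∈ U, IsIrr imp one P) ∧
    ∀ P Q : Set H, P ∈ U → IsIrr imp one Q → P ⊆ Q → Q ∈ U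

/-- Heyting implication `U ⇒ V` on upsets of `X(H)` (the complement relative to
`X(H)` of the downset generated by `U ∩ Vᶜ`). -/
def himp (imp : H → H → H) (one : H) (U V : Set (Set H)) : Set (Set H) :=
  {P | IsIrr imp one P ∧ ∀ Q : Set H, IsIrr imp one Q → P ⊆ Q → Q ∈ U → Q ∈ V}

/-- Frontal operator on a Hilbert algebra. -/
def IsFrontal (imp : H → H → H) (one : H) (t : H → H) : Prop :=
  (∀ a b : H, hle imp one (t (imp a b)) (imp (t a) (t b))) ∧
  (∀ a : H, hle imp one a (t a)) ∧
  (∀ a b : H, hle imp one (t a) (imp (imp (imp b a) b) b))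

/-- The elements of `⟨φ[H]⟩`: finite (nonempty) intersections `φ(a₁) ∩ ⋯ ∩ φ(aₙ)`. -/
def gen (imp : H → H → H) (one : H) (U : Set (Set H)) : Prop :=
  ∃ l : List H, l ≠ [] ∧ U = {P | IsIrr imp one P ∧ ∀ a ∈ l, a ∈ P}

/-- The π-extension `τ^π` of a unary map `t` to the upsets of `X(H)`. -/
def tpi (imp : H → H → H) (one : H) (t : H → H) (U : Set (Set H)) : Set (Set H) :=
  {P | IsIrr imp one P ∧ ∀ Q : Set H, IsIrr imp one Q → t ⁻¹' P ⊆ Q → Q ∈ U}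

/-- Maximal elements (w.r.t. inclusion) of a family of sets. -/
def Mx (S : Set (Set H)) : Set (Set H) := {P ∈ S | ∀ Q ∈ S, P ⊆ Q → P = Q}

/-- Relative complement in `X(H)`. -/
def Xc (imp : H → H → H) (one : H) (U : Set (Set H)) : Set (Set H) :=
  {P | IsIrr imp one P ∧ P ∉ U}

/-- Downset (within `X(H)`) generated by a family `S`. -/
def dn (imp : H → H → H) (one : H) (S : Set (Set H)) : Set (Set H) :=
  {P | IsIrr imp one P ∧ ∃ Q ∈ S, P ⊆ Q}

/-- Implicative semilattice axioms for `(inf, imp, one)`. -/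
def IsImpSL (inf : H → H → H) (imp : H → H → H) (one : H) : Prop :=
  (∀ a b : H, inf a b = inf b a) ∧
  (∀ a b c : H, inf (inf a b) c = inf a (inf b c)) ∧
  (∀ a : H, inf a a = a) ∧
  (∀ a : H, inf a one = a) ∧
  (∀ a b c : H, inf (inf a b) c = inf a b ↔ inf a (imp b c) = a)

/-- The semilattice order: `a ≤ b` iff `a ∧ b = a`. -/
def sle (inf : H → H → H) (a b : H) : Prop := inf a b = a

end FH

namespace StmtAux
open FH

variable {H : Type*} {imp : H → H → H} {one : H}

lemma mp_one (hH : IsHilbert imp one) {y : H} (h : imp one y = one) : y = one := by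
  obtain ⟨K, _S, antisym⟩ := hH
  refine antisym y one ?_ h
  have hK := K y one
  rw [h] at hK
  exact hK

lemma refl_one (hH : IsHilbert imp one) (a : H) : imp a a = one := by
  have hS := hH.2.1 a (imp a a) a
  rw [hH.1 a (imp a a), hH.1 a a] at hS
  exact mp_one hH (mp_one hH hS)

lemma to_one (hH : IsHilbert imp one) (a : H) : imp a one = one := by
  have hK := hH.1 one a
  exact mp_one hH hK

lemma weaken (hH : IsHilbert imp one) {u v : H} (h : imp u v = one) (a : H) :
    imp a (imp u v) = one := by
  rw [h]; exact to_one hH a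

lemma trans_le (hH : IsHilbert imp one) {a b c : H}
    (hab : imp a b = one) (hbc : imp b c = one) : imp a c = one := by
  have h1 : imp a (imp b c) = one := weaken hH hbc a
  have h2 := hH.2.1 a b c
  rw [h1] at h2
  have h3 := mp_one hH h2
  rw [hab] at h3
  exact mp_one hH h3

lemma prefix_mono (hH : IsHilbert imp one) {u v : H} (h : imp u v = one) (a : H) :
    imp (imp a u) (imp a v) = one := by
  have h1 : imp a (imp u v) = one := weaken hH h a
  have h2 := hH.2.1 a u v
  rw [h1] at h2
  exact mp_one hH h2

lemma fmp {P : Set H} (hP : IsImpFilter imp one P) {z y : H}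
    (hz : z ∈ P) (hzy : imp z y ∈ P) : y ∈ P := hP.2 z y hz hzy

lemma k_elem (hH : IsHilbert imp one) {P : Set H} (hP : IsImpFilter imp one P)
    {z : H} (hz : z ∈ P) (a : H) : imp a z ∈ P := by
  refine fmp hP hz ?_
  rw [hH.1 z a]
  exact hP.1

/-- `lift l x = a₁ → (a₂ → ⋯ → (aₙ → x))`. -/
def lift (imp : H → H → H) (l : List H) (x : H) : H := l.foldr imp x

lemma le_lift (hH : IsHilbert imp one) (l : List H) (a : H) :
    imp a (lift imp l a) = one := by
  induction l with
  | nil => exact refl_one hH a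
  | cons b l ih =>
      exact trans_le hH ih (by have := hH.1 (lift imp l a) b; exact this)

lemma lift_mem_of_mem (hH : IsHilbert imp one) {P : Set H} (hP : IsImpFilter imp one P)
    (l : List H) {x : H} (hx : x ∈ P) : lift imp l x ∈ P := by
  induction l with
  | nil => exact hx
  | cons b l ih => exact k_elem hH hP ih b

lemma lift_imp_le (hH : IsHilbert imp one) (l : List H) (x y : H) :
    imp (lift imp l (imp x y)) (imp (lift imp l x) (lift imp l y)) = one := by
  induction l with
  | nil => exact refl_one hH (imp x y)
  | cons a l ih =>
      have h1 : imp (imp a (lift imp l (imp x y)))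
          (imp a (imp (lift imp l x) (lift imp l y))) = one := prefix_mono hH ih a
      have h2 := hH.2.1 a (lift imp l x) (lift imp l y)
      exact trans_le hH h1 h2

lemma extF_filter (hH : IsHilbert imp one) {P : Set H} (hP : IsImpFilter imp one P)
    (l : List H) : IsImpFilter imp one {x | lift imp l x ∈ P} := by
  constructor
  · exact lift_mem_of_mem hH hP l hP.1
  · intro x y hx hxy
    have h1 : imp (lift imp l (imp x y)) (imp (lift imp l x) (lift imp l y)) ∈ P := by
      rw [lift_imp_le hH l x y]; exact hP.1
    exact fmp hP hx (fmp hP hxy h1)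

lemma lift_mem_of_mem_list (hH : IsHilbert imp one) {P : Set H}
    (hP : IsImpFilter imp one P) {l : List H} {a : H} (ha : a ∈ l) : lift imp l a ∈ P := by
  induction l with
  | nil => exact absurd ha List.not_mem_nil
  | cons b l ih =>
      rcases List.mem_cons.mp ha with rfl | ha'
      · show imp a (lift imp l a) ∈ P
        rw [le_lift hH l a]; exact hP.1
      · exact k_elem hH hP (ih ha') b

lemma lift_mp (hH : IsHilbert imp one) {Q : Set H} (hQ : IsImpFilter imp one Q)
    {l : List H} (hl : ∀ a ∈ l, a ∈ Q) {b : H} (hb : lift imp l b ∈ Q) : b ∈ Q := by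
  induction l with
  | nil => exact hb
  | cons a l ih =>
      exact ih (fun c hc => hl c (List.mem_cons_of_mem a hc))
        (fmp hQ (hl a List.mem_cons_self) hb)

/-- Separation: every filter `F` missing `b` extends to an irreducible filter missing `b`. -/
lemma exists_irr (hH : IsHilbert imp one) {F : Set H} (hF : IsImpFilter imp one F)
    {b : H} (hb : b ∉ F) : ∃ Q, IsIrr imp one Q ∧ F ⊆ Q ∧ b ∉ Q := by
  set S : Set (Set H) := {G | IsImpFilter imp one G ∧ b ∉ G} with hS
  have hchain : ∀ c ⊆ S, IsChain (· ⊆ ·) c → c.Nonempty →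
      ∃ ub ∈ S, ∀ s ∈ c, s ⊆ ub := by
    intro c hcS hc ⟨G0, hG0⟩
    refine ⟨⋃₀ c, ⟨⟨Set.mem_sUnion_of_mem (hcS hG0).1.1 hG0, ?_⟩, ?_⟩,
      fun s hs => Set.subset_sUnion_of_mem hs⟩
    · rintro x y ⟨G1, hG1, hx⟩ ⟨G2, hG2, hxy⟩
      rcases eq_or_ne G1 G2 with rfl | hne
      · exact ⟨G1, hG1, fmp (hcS hG1).1 hx hxy⟩
      · rcases hc hG1 hG2 hne with h | h
        · exact ⟨G2, hG2, fmp (hcS hG2).1 (h hx) hxy⟩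
        · exact ⟨G1, hG1, fmp (hcS hG1).1 hx (h hxy)⟩
    · rintro ⟨G, hG, hbG⟩
      exact (hcS hG).2 hbG
  obtain ⟨m, hFm, hm⟩ := zorn_subset_nonempty S hchain F ⟨hF, hb⟩
  have hmS : m ∈ S := hm.prop
  refine ⟨m, ⟨hmS.1, ?_, ?_⟩, hFm, hmS.2⟩
  · intro huniv
    exact hmS.2 (huniv ▸ Set.mem_univ b)
  · intro F1 F2 hF1 hF2 hmeq
    by_contra hcon
    push_neg at hcon
    have hb1 : b ∈ F1 := by
      by_contra hb1
      have hsub : m ⊆ F1 := hmeq ▸ Set.inter_subset_left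
      exact hcon.1 ((hm.eq_of_subset ⟨hF1, hb1⟩ hsub).symm ▸ rfl)
    have hb2 : b ∈ F2 := by
      by_contra hb2
      have hsub : m ⊆ F2 := hmeq ▸ Set.inter_subset_right
      exact hcon.2 ((hm.eq_of_subset ⟨hF2, hb2⟩ hsub).symm ▸ rfl)
    exact hmS.2 (hmeq ▸ Set.mem_inter hb1 hb2)

end StmtAux

/-- The set `⟨φ[H]⟩` of finite intersections `φ(a₁) ∩ ⋯ ∩ φ(aₙ)` is closed under
intersections and under the Heyting implication `⇒` of the upsets of `X(H)`,
contains the top `X(H)`, and `(⟨φ[H]⟩, ∩, ⇒, X(H))` is an implicative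
semilattice (residuation law). -/
theorem stmt_4 {H : Type*} (imp : H → H → H) (one : H)
    (hH : FH.IsHilbert imp one) :
    (∀ U V, FH.gen imp one U → FH.gen imp one V → FH.gen imp one (U ∩ V)) ∧
    FH.gen imp one (FH.XH imp one) ∧
    (∀ U V, FH.gen imp one U → FH.gen imp one V →
      FH.gen imp one (FH.himp imp one U V)) ∧
    (∀ U V W, FH.gen imp one U → FH.gen imp one V → FH.gen imp one W →
      (U ∩ V ⊆ W ↔ U ⊆ FH.himp imp one V W)) := by
  open StmtAux in
  -- gen sets are upsets and consist of irreducible filters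
  have genIrr : ∀ U, FH.gen imp one U → ∀ P ∈ U, FH.IsIrr imp one P := by
    rintro U ⟨l, -, rfl⟩ P hP; exact hP.1
  have genUp : ∀ U, FH.gen imp one U → ∀ P ∈ U, ∀ Q, FH.IsIrr imp one Q → P ⊆ Q → Q ∈ U := by
    rintro U ⟨l, -, rfl⟩ P hP Q hQ hPQ
    exact ⟨hQ, fun a ha => hPQ (hP.2 a ha)⟩
  refine ⟨?_, ?_, ?_, ?_⟩
  · -- closed under intersections
    rintro U V ⟨l, hl, rfl⟩ ⟨m, hm, rfl⟩
    refine ⟨l ++ m, by simp [hl], ?_⟩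
    ext P
    constructor
    · rintro ⟨⟨hP, hlP⟩, ⟨-, hmP⟩⟩
      exact ⟨hP, fun a ha => (List.mem_append.mp ha).elim (hlP a) (hmP a)⟩
    · rintro ⟨hP, h⟩
      exact ⟨⟨hP, fun a ha => h a (List.mem_append_left m ha)⟩,
        ⟨hP, fun a ha => h a (List.mem_append_right l ha)⟩⟩
  · -- X(H) is generated
    refine ⟨[one], by simp, ?_⟩
    ext P
    constructor
    · intro hP
      exact ⟨hP, by intro a ha; rw [List.mem_singleton] at ha; exact ha ▸ hP.1.1⟩
    · rintro ⟨hP, -⟩; exact hP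
  · -- closed under Heyting implication
    rintro U V ⟨l, hl, rfl⟩ ⟨m, hm, rfl⟩
    refine ⟨m.map (StmtAux.lift imp l), by simp [hm], ?_⟩
    ext P
    constructor
    · rintro ⟨hP, hPimp⟩
      refine ⟨hP, ?_⟩
      intro c hc
      rw [List.mem_map] at hc
      obtain ⟨b, hb, rfl⟩ := hc
      by_contra hcb
      -- extend P by l, then separate from b
      have hEF : FH.IsImpFilter imp one {x | StmtAux.lift imp l x ∈ P} :=
        extF_filter hH hP.1 l
      obtain ⟨Q, hQ, hFQ, hbQ⟩ := exists_irr hH hEF hcb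
      have hPQ : P ⊆ Q := fun x hx => hFQ (lift_mem_of_mem hH hP.1 l hx)
      have hQU : Q ∈ {R | FH.IsIrr imp one R ∧ ∀ a ∈ l, a ∈ R} :=
        ⟨hQ, fun a ha => hFQ (lift_mem_of_mem_list hH hP.1 ha)⟩
      have hQV := hPimp Q hQ hPQ hQU
      exact hbQ (hQV.2 b hb)
    · rintro ⟨hP, hlift⟩
      refine ⟨hP, ?_⟩
      rintro Q hQ hPQ ⟨-, hQl⟩
      refine ⟨hQ, fun b hb => ?_⟩
      have : StmtAux.lift imp l b ∈ Q :=
        hPQ (hlift _ (List.mem_map.mpr ⟨b, hb, rfl⟩))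
      exact lift_mp hH hQ.1 hQl this
  · -- residuation
    intro U V W hU hV hW
    constructor
    · intro h P hPU
      refine ⟨genIrr U hU P hPU, ?_⟩
      intro Q hQ hPQ hQV
      exact h ⟨genUp U hU P hPU Q hQ hPQ, hQV⟩
    · rintro h P ⟨hPU, hPV⟩
      exact (h hPU).2 P (genIrr V hV P hPV) (subset_refl P) hPV
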